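/- Γ₂-type lower bound: for every N ≥ 3, every energy function E_N : S_N → ℝ, every β ≥ 0, and every f : S_N → ℝ, π_N^β[ (𝒢_N^β f)² ] ≥ Σ_{a,b∈B_N, a∩b≠∅} π_N^β[ c_a c_b ∇_a f ∇_b f ] + (1/2) Σ_{a,b∈B_N, a∩b=∅} π_N^β[ c_a c_b (1 − c_b^a/c_b) ∇_a f ∇_b f ], where c_b^a(σ) = c_b(σ^a). -/

import Mathlib

open Finset Filter Topology
open scoped BigOperators

attribute [local instance] Classical.propDecidable

namespace PermGibbs

/-- The symmetric group on `{1, …, N}`. -/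
abbrev SN (N : ℕ) := Equiv.Perm (Fin N)

/-- `σ^a` for `a = {x,y}`: compose `σ` with the transposition exchanging `x` and `y`. -/
def pexch {N : ℕ} (σ : SN N) (x y : Fin N) : SN N := σ * Equiv.swap x y

/-- The gradient `∇_a f` for `a = {x,y}`. -/
def pgrad {N : ℕ} (f : SN N → ℝ) (x y : Fin N) (σ : SN N) : ℝ := f (pexch σ x y) - f σ

/-- Partition function of the Gibbs measure on `S_N`. -/
noncomputable def pZ (N : ℕ) (β : ℝ) (E : SN N → ℝ) : ℝ :=
  ∑ σ : SN N, Real.exp (-(β * E σ))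

/-- The Gibbs probability `π_N^β`. -/
noncomputable def ppi (N : ℕ) (β : ℝ) (E : SN N → ℝ) (σ : SN N) : ℝ :=
  Real.exp (-(β * E σ)) / pZ N β E

/-- Expectation with respect to `π_N^β`. -/
noncomputable def pexpect (N : ℕ) (β : ℝ) (E : SN N → ℝ) (g : SN N → ℝ) : ℝ :=
  ∑ σ : SN N, ppi N β E σ * g σ

/-- Variance with respect to `π_N^β`. -/
noncomputable def pvar (N : ℕ) (β : ℝ) (E : SN N → ℝ) (f : SN N → ℝ) : ℝ :=
  pexpect N β E (fun σ => (f σ - pexpect N β E f) ^ 2)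

/-- The rates `c_a = (1/N) exp(−(β/2) ∇_a E_N)` for `a = {x,y}`. -/
noncomputable def prate {N : ℕ} (β : ℝ) (E : SN N → ℝ) (x y : Fin N) (σ : SN N) : ℝ :=
  (1 / (N : ℝ)) * Real.exp (-(β / 2) * (E (pexch σ x y) - E σ))

/-- Dirichlet form of the generator `𝒢_N^β` (the sum over unordered pairs is
written as half the sum over ordered distinct pairs). -/
noncomputable def pDir (N : ℕ) (β : ℝ) (E : SN N → ℝ) (f : SN N → ℝ) : ℝ :=
  (1 / 2) * ((1 / 2) * ∑ x : Fin N, ∑ y : Fin N,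
    if x ≠ y then pexpect N β E (fun σ => prate β E x y σ * (pgrad f x y σ) ^ 2) else 0)

/-- The generator `𝒢_N^β` applied to `f` (sum over unordered pairs, written as a
sum over ordered pairs `x < y`). -/
noncomputable def pGen (N : ℕ) (β : ℝ) (E : SN N → ℝ) (f : SN N → ℝ) (σ : SN N) : ℝ :=
  ∑ x : Fin N, ∑ y : Fin N, if x < y then prate β E x y σ * pgrad f x y σ else 0

lemma pexch_inv {N : ℕ} (σ : SN N) (x y : Fin N) : pexch (pexch σ x y) x y = σ := by
  simp [pexch, mul_assoc]

lemma swap_comm' {N : ℕ} {x y u v : Fin N} (hxu : x ≠ u) (hxv : x ≠ v) (hyu : y ≠ u)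
    (hyv : y ≠ v) : Equiv.swap x y * Equiv.swap u v = Equiv.swap u v * Equiv.swap x y := by
  ext z
  simp only [Equiv.Perm.mul_apply, Equiv.swap_apply_def]
  split_ifs <;> simp_all

lemma pexch_comm {N : ℕ} (σ : SN N) {x y u v : Fin N} (hxu : x ≠ u) (hxv : x ≠ v)
    (hyu : y ≠ u) (hyv : y ≠ v) :
    pexch (pexch σ x y) u v = pexch (pexch σ u v) x y := by
  simp [pexch, mul_assoc, swap_comm' hxu hxv hyu hyv]

lemma pexpect_congr {N : ℕ} (β : ℝ) (E : SN N → ℝ) {g h : SN N → ℝ}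
    (hg : ∀ σ, g σ = h σ) : pexpect N β E g = pexpect N β E h := by
  unfold pexpect; exact Finset.sum_congr rfl fun σ _ => by rw [hg]

lemma pexpect_add {N : ℕ} (β : ℝ) (E : SN N → ℝ) (g h : SN N → ℝ) :
    pexpect N β E (fun σ => g σ + h σ) = pexpect N β E g + pexpect N β E h := by
  simp [pexpect, mul_add, Finset.sum_add_distrib]

lemma pexpect_sub {N : ℕ} (β : ℝ) (E : SN N → ℝ) (g h : SN N → ℝ) :
    pexpect N β E (fun σ => g σ - h σ) = pexpect N β E g - pexpect N β E h := by
  simp [pexpect, mul_sub, Finset.sum_sub_distrib]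

lemma pexpect_sum {N : ℕ} (β : ℝ) (E : SN N → ℝ) {ι : Type*} [Fintype ι]
    (g : ι → SN N → ℝ) :
    pexpect N β E (fun σ => ∑ i, g i σ) = ∑ i, pexpect N β E (g i) := by
  simp only [pexpect, Finset.mul_sum]
  exact Finset.sum_comm

lemma pexpect_ite {N : ℕ} (β : ℝ) (E : SN N → ℝ) (P : Prop) [Decidable P]
    (g : SN N → ℝ) :
    pexpect N β E (fun σ => if P then g σ else 0) = if P then pexpect N β E g else 0 := by
  split_ifs <;> simp [pexpect]

lemma pexpect_nonneg {N : ℕ} (β : ℝ) (E : SN N → ℝ) {g : SN N → ℝ}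
    (hg : ∀ σ, 0 ≤ g σ) : 0 ≤ pexpect N β E g := by
  apply Finset.sum_nonneg
  intro σ _
  apply mul_nonneg _ (hg σ)
  apply div_nonneg (Real.exp_nonneg _)
  exact Finset.sum_nonneg fun τ _ => Real.exp_nonneg _

lemma prate_pos {N : ℕ} (hN : 0 < N) (β : ℝ) (E : SN N → ℝ) (x y : Fin N) (σ : SN N) :
    0 < prate β E x y σ := by
  have h : (0:ℝ) < N := by exact_mod_cast hN
  apply mul_pos _ (Real.exp_pos _)
  positivity

lemma db {N : ℕ} (β : ℝ) (E : SN N → ℝ) (x y : Fin N) (g : SN N → ℝ) :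
    pexpect N β E (fun σ => prate β E x y σ * g σ)
      = pexpect N β E (fun σ => prate β E x y σ * g (pexch σ x y)) := by
  have hF : ∀ σ : SN N, ppi N β E (pexch σ x y) * prate β E x y (pexch σ x y)
      = ppi N β E σ * prate β E x y σ := by
    intro σ
    simp only [ppi, prate, pexch_inv]
    have h1 : Real.exp (-(β * E σ)) * Real.exp (-(β / 2) * (E (pexch σ x y) - E σ))
        = Real.exp (-(β * E (pexch σ x y))) *
          Real.exp (-(β / 2) * (E σ - E (pexch σ x y))) := by
      rw [← Real.exp_add, ← Real.exp_add]; congr 1; ring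
    linear_combination (1 / (N:ℝ)) / pZ N β E * h1.symm
  unfold pexpect
  calc ∑ σ : SN N, ppi N β E σ * (prate β E x y σ * g σ)
      = ∑ σ : SN N, ppi N β E (pexch σ x y) *
          (prate β E x y (pexch σ x y) * g (pexch σ x y)) := by
        refine (Equiv.sum_comp (Equiv.mulRight (Equiv.swap x y))
          (fun τ => ppi N β E τ * (prate β E x y τ * g τ))).symm.trans ?_
        rfl
    _ = ∑ σ : SN N, ppi N β E σ * (prate β E x y σ * g (pexch σ x y)) := by
        refine Finset.sum_congr rfl fun σ _ => ?_
        rw [← mul_assoc, ← mul_assoc, hF]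


noncomputable def DD {N : ℕ} (f : SN N → ℝ) (x y u v : Fin N) (σ : SN N) : ℝ :=
  f (pexch (pexch σ x y) u v) - f (pexch σ x y) - f (pexch σ u v) + f σ

lemma wid {N : ℕ} (β : ℝ) (E : SN N → ℝ) {x y u v : Fin N} (hxu : x ≠ u) (hxv : x ≠ v)
    (hyu : y ≠ u) (hyv : y ≠ v) (σ : SN N) :
    prate β E u v σ * prate β E x y (pexch σ u v)
      = prate β E x y σ * prate β E u v (pexch σ x y) := by
  simp only [prate]
  rw [← pexch_comm σ hxu hxv hyu hyv]
  have h : Real.exp (-(β / 2) * (E (pexch σ u v) - E σ)) *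
        Real.exp (-(β / 2) * (E (pexch (pexch σ x y) u v) - E (pexch σ u v)))
      = Real.exp (-(β / 2) * (E (pexch σ x y) - E σ)) *
        Real.exp (-(β / 2) * (E (pexch (pexch σ x y) u v) - E (pexch σ x y))) := by
    rw [← Real.exp_add, ← Real.exp_add]; congr 1; ring
  linear_combination (1 / (N:ℝ))^2 * h

lemma key {N : ℕ} (hN : 3 ≤ N) (β : ℝ) (E : SN N → ℝ) (f : SN N → ℝ)
    {x y u v : Fin N} (hxu : x ≠ u) (hxv : x ≠ v) (hyu : y ≠ u) (hyv : y ≠ v) :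
    (1 / 2) * pexpect N β E (fun σ =>
        prate β E x y σ * prate β E u v σ *
          (1 - prate β E u v (pexch σ x y) / prate β E u v σ) *
          pgrad f x y σ * pgrad f u v σ)
      ≤ pexpect N β E (fun σ =>
          prate β E x y σ * prate β E u v σ * pgrad f x y σ * pgrad f u v σ) := by
  have hNpos : 0 < N := by omega
  have hcb : ∀ σ : SN N, prate β E u v σ ≠ 0 := fun σ => (prate_pos hNpos β E u v σ).ne'
  have hcommS : ∀ σ : SN N, pexch (pexch σ u v) x y = pexch (pexch σ x y) u v :=
    fun σ => (pexch_comm σ hxu hxv hyu hyv).symm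
  have hD1 : ∀ σ : SN N, DD f x y u v (pexch σ x y) = -DD f x y u v σ := by
    intro σ; simp only [DD, pexch_inv]; ring
  have hD2 : ∀ σ : SN N, DD f x y u v (pexch σ u v) = -DD f x y u v σ := by
    intro σ; simp only [DD, hcommS, pexch_inv]; ring
  have e0 : pexpect N β E (fun σ =>
        prate β E x y σ * prate β E u v σ *
          (1 - prate β E u v (pexch σ x y) / prate β E u v σ) *
          pgrad f x y σ * pgrad f u v σ)
      = pexpect N β E (fun σ =>
          prate β E x y σ * prate β E u v σ * pgrad f x y σ * pgrad f u v σ)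
        - pexpect N β E (fun σ =>
          prate β E x y σ * prate β E u v (pexch σ x y) * pgrad f x y σ * pgrad f u v σ) := by
    rw [← pexpect_sub]
    refine pexpect_congr β E fun σ => ?_
    field_simp [hcb σ]
  rw [e0]
  -- it suffices to show nonnegativity of the symmetrized quantity
  suffices h : 0 ≤ pexpect N β E (fun σ =>
        prate β E x y σ * prate β E u v σ * pgrad f x y σ * pgrad f u v σ)
      + pexpect N β E (fun σ =>
        prate β E x y σ * prate β E u v (pexch σ x y) * pgrad f x y σ * pgrad f u v σ) by
    linarith
  have hA : pexpect N β E (fun σ =>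
        prate β E x y σ * prate β E u v σ * pgrad f x y σ * pgrad f u v σ)
      + pexpect N β E (fun σ =>
        prate β E x y σ * prate β E u v (pexch σ x y) * pgrad f x y σ * pgrad f u v σ)
      = pexpect N β E (fun σ =>
        prate β E x y σ * prate β E u v σ *
          ((f (pexch σ x y) - f σ) * (-(DD f x y u v σ)))) := by
    have hdb := db β E x y
      (fun τ => prate β E u v (pexch τ x y) * (pgrad f x y τ * pgrad f u v τ))
    have h1 : pexpect N β E (fun σ =>
          prate β E x y σ * prate β E u v (pexch σ x y) * pgrad f x y σ * pgrad f u v σ)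
        = pexpect N β E (fun σ =>
          prate β E x y σ * prate β E u v σ *
            ((f σ - f (pexch σ x y)) * (f (pexch (pexch σ x y) u v) - f (pexch σ x y)))) := by
      calc pexpect N β E (fun σ =>
            prate β E x y σ * prate β E u v (pexch σ x y) * pgrad f x y σ * pgrad f u v σ)
          = pexpect N β E (fun σ => prate β E x y σ *
              (prate β E u v (pexch σ x y) * (pgrad f x y σ * pgrad f u v σ))) :=
            pexpect_congr β E fun σ => by ring
        _ = pexpect N β E (fun σ => prate β E x y σ *
              (prate β E u v (pexch (pexch σ x y) x y) *
                (pgrad f x y (pexch σ x y) * pgrad f u v (pexch σ x y)))) := hdb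
        _ = _ := by
            refine pexpect_congr β E fun σ => ?_
            simp only [pgrad, pexch_inv]
            ring
    rw [h1, ← pexpect_add]
    refine pexpect_congr β E fun σ => ?_
    simp only [pgrad, DD]
    ring
  -- form 1 : via detailed balance in (x,y)
  have hT1 : pexpect N β E (fun σ =>
        prate β E x y σ * prate β E u v σ *
          ((f (pexch σ x y) - f σ) * (-(DD f x y u v σ))))
      = pexpect N β E (fun σ =>
        prate β E x y σ * (prate β E u v (pexch σ x y) *
          ((f σ - f (pexch σ x y)) * DD f x y u v σ))) := by
    have hdb := db β E x y
      (fun τ => prate β E u v τ * ((f (pexch τ x y) - f τ) * (-(DD f x y u v τ))))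
    calc pexpect N β E (fun σ =>
          prate β E x y σ * prate β E u v σ *
            ((f (pexch σ x y) - f σ) * (-(DD f x y u v σ))))
        = pexpect N β E (fun σ => prate β E x y σ * (prate β E u v σ *
            ((f (pexch σ x y) - f σ) * (-(DD f x y u v σ))))) :=
          pexpect_congr β E fun σ => by ring
      _ = pexpect N β E (fun σ => prate β E x y σ * (prate β E u v (pexch σ x y) *
            ((f (pexch (pexch σ x y) x y) - f (pexch σ x y)) *
              (-(DD f x y u v (pexch σ x y)))))) := hdb
      _ = _ := by
          refine pexpect_congr β E fun σ => ?_
          simp only [pexch_inv, hD1]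
          ring
  -- form 2 : via detailed balance in (u,v) and the weight identity
  have hT2 : pexpect N β E (fun σ =>
        prate β E x y σ * prate β E u v σ *
          ((f (pexch σ x y) - f σ) * (-(DD f x y u v σ))))
      = pexpect N β E (fun σ =>
        prate β E x y σ * (prate β E u v (pexch σ x y) *
          ((f (pexch (pexch σ x y) u v) - f (pexch σ u v)) * DD f x y u v σ))) := by
    have hdb := db β E u v
      (fun τ => prate β E x y τ * ((f (pexch τ x y) - f τ) * (-(DD f x y u v τ))))
    calc pexpect N β E (fun σ =>
          prate β E x y σ * prate β E u v σ *
            ((f (pexch σ x y) - f σ) * (-(DD f x y u v σ))))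
        = pexpect N β E (fun σ => prate β E u v σ * (prate β E x y σ *
            ((f (pexch σ x y) - f σ) * (-(DD f x y u v σ))))) :=
          pexpect_congr β E fun σ => by ring
      _ = pexpect N β E (fun σ => prate β E u v σ * (prate β E x y (pexch σ u v) *
            ((f (pexch (pexch σ u v) x y) - f (pexch σ u v)) *
              (-(DD f x y u v (pexch σ u v)))))) := hdb
      _ = _ := by
          refine pexpect_congr β E fun σ => ?_
          simp only [hcommS, hD2, pexch_inv]
          linear_combination ((f (pexch (pexch σ x y) u v) - f (pexch σ u v)) *
            DD f x y u v σ) * wid β E hxu hxv hyu hyv σ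
  -- combine the two forms
  have hS : pexpect N β E (fun σ =>
        prate β E x y σ * prate β E u v σ *
          ((f (pexch σ x y) - f σ) * (-(DD f x y u v σ))))
      + pexpect N β E (fun σ =>
        prate β E x y σ * prate β E u v σ *
          ((f (pexch σ x y) - f σ) * (-(DD f x y u v σ))))
      = pexpect N β E (fun σ =>
        prate β E x y σ * prate β E u v (pexch σ x y) * DD f x y u v σ ^ 2) := by
    nth_rewrite 1 [hT1]
    nth_rewrite 1 [hT2]
    rw [← pexpect_add]
    refine pexpect_congr β E fun σ => ?_
    simp only [DD]
    ring
  have hSnn : 0 ≤ pexpect N β E (fun σ =>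
      prate β E x y σ * prate β E u v (pexch σ x y) * DD f x y u v σ ^ 2) := by
    refine pexpect_nonneg β E fun σ => ?_
    have h1 := (prate_pos hNpos β E x y σ).le
    have h2 := (prate_pos hNpos β E u v (pexch σ x y)).le
    positivity
  linarith [hA, hS, hSnn]


/-- `Γ₂`-type lower bound:
`π[(𝒢f)²] ≥ Σ_{a∩b≠∅} π[c_a c_b ∇_a f ∇_b f] + (1/2) Σ_{a∩b=∅} π[c_a c_b (1 − c_b^a/c_b) ∇_a f ∇_b f]`.
Unordered pairs `a = {x,y}` are represented by ordered pairs with `x < y`. -/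
theorem gamma_two_lower_bound (N : ℕ) (hN : 3 ≤ N) (E : SN N → ℝ) (β : ℝ)
    (hβ : 0 ≤ β) (f : SN N → ℝ) :
    (∑ x : Fin N, ∑ y : Fin N, ∑ u : Fin N, ∑ v : Fin N,
        if x < y ∧ u < v ∧ (x = u ∨ x = v ∨ y = u ∨ y = v) then
          pexpect N β E (fun σ =>
            prate β E x y σ * prate β E u v σ * pgrad f x y σ * pgrad f u v σ)
        else 0)
      + (1 / 2) * (∑ x : Fin N, ∑ y : Fin N, ∑ u : Fin N, ∑ v : Fin N,
          if x < y ∧ u < v ∧ ¬(x = u ∨ x = v ∨ y = u ∨ y = v) then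
            pexpect N β E (fun σ =>
              prate β E x y σ * prate β E u v σ *
                (1 - prate β E u v (pexch σ x y) / prate β E u v σ) *
                pgrad f x y σ * pgrad f u v σ)
          else 0)
      ≤ pexpect N β E (fun σ => (pGen N β E f σ) ^ 2) := by
  have expand : pexpect N β E (fun σ => (pGen N β E f σ) ^ 2)
      = ∑ x : Fin N, ∑ y : Fin N, ∑ u : Fin N, ∑ v : Fin N,
          if x < y ∧ u < v then
            pexpect N β E (fun σ =>
              prate β E x y σ * prate β E u v σ * pgrad f x y σ * pgrad f u v σ)
          else 0 := by
    have h1 : ∀ σ : SN N, (pGen N β E f σ) ^ 2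
        = ∑ x : Fin N, ∑ y : Fin N, ∑ u : Fin N, ∑ v : Fin N,
            if x < y ∧ u < v then
              prate β E x y σ * prate β E u v σ * pgrad f x y σ * pgrad f u v σ
            else 0 := by
      intro σ
      rw [sq]
      nth_rewrite 1 [pGen]
      rw [Finset.sum_mul]
      refine Finset.sum_congr rfl fun x _ => ?_
      rw [Finset.sum_mul]
      refine Finset.sum_congr rfl fun y _ => ?_
      rw [ite_mul, zero_mul]
      by_cases hxy : x < y
      · rw [if_pos hxy, pGen, Finset.mul_sum]
        refine Finset.sum_congr rfl fun u _ => ?_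
        rw [Finset.mul_sum]
        refine Finset.sum_congr rfl fun v _ => ?_
        rw [mul_ite, mul_zero]
        by_cases huv : u < v
        · rw [if_pos huv, if_pos ⟨hxy, huv⟩]; ring
        · rw [if_neg huv, if_neg (by tauto)]
      · rw [if_neg hxy, eq_comm]
        refine Finset.sum_eq_zero fun u _ => Finset.sum_eq_zero fun v _ => ?_
        rw [if_neg (by tauto)]
    rw [pexpect_congr β E h1]
    rw [pexpect_sum β E]
    refine Finset.sum_congr rfl fun x _ => ?_
    rw [pexpect_sum β E]
    refine Finset.sum_congr rfl fun y _ => ?_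
    rw [pexpect_sum β E]
    refine Finset.sum_congr rfl fun u _ => ?_
    rw [pexpect_sum β E]
    refine Finset.sum_congr rfl fun v _ => ?_
    exact pexpect_ite β E _ _
  rw [expand]
  have hsplit : (∑ x : Fin N, ∑ y : Fin N, ∑ u : Fin N, ∑ v : Fin N,
        if x < y ∧ u < v then
          pexpect N β E (fun σ =>
            prate β E x y σ * prate β E u v σ * pgrad f x y σ * pgrad f u v σ)
        else 0)
      = (∑ x : Fin N, ∑ y : Fin N, ∑ u : Fin N, ∑ v : Fin N,
          if x < y ∧ u < v ∧ (x = u ∨ x = v ∨ y = u ∨ y = v) then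
            pexpect N β E (fun σ =>
              prate β E x y σ * prate β E u v σ * pgrad f x y σ * pgrad f u v σ)
          else 0)
        + (∑ x : Fin N, ∑ y : Fin N, ∑ u : Fin N, ∑ v : Fin N,
            if x < y ∧ u < v ∧ ¬(x = u ∨ x = v ∨ y = u ∨ y = v) then
              pexpect N β E (fun σ =>
                prate β E x y σ * prate β E u v σ * pgrad f x y σ * pgrad f u v σ)
            else 0) := by
    rw [← Finset.sum_add_distrib]
    refine Finset.sum_congr rfl fun x _ => ?_
    rw [← Finset.sum_add_distrib]
    refine Finset.sum_congr rfl fun y _ => ?_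
    rw [← Finset.sum_add_distrib]
    refine Finset.sum_congr rfl fun u _ => ?_
    rw [← Finset.sum_add_distrib]
    refine Finset.sum_congr rfl fun v _ => ?_
    by_cases h1 : x < y <;> by_cases h2 : u < v <;>
      by_cases h3 : (x = u ∨ x = v ∨ y = u ∨ y = v) <;> simp [h1, h2, h3]
  rw [hsplit]
  apply add_le_add le_rfl
  simp only [Finset.mul_sum]
  refine Finset.sum_le_sum fun x _ => ?_
  refine Finset.sum_le_sum fun y _ => ?_
  refine Finset.sum_le_sum fun u _ => ?_
  refine Finset.sum_le_sum fun v _ => ?_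
  by_cases hc : x < y ∧ u < v ∧ ¬(x = u ∨ x = v ∨ y = u ∨ y = v)
  · rw [if_pos hc, if_pos hc]
    obtain ⟨hxy, huv, hno⟩ := hc
    push_neg at hno
    exact key hN β E f hno.1 hno.2.1 hno.2.2.1 hno.2.2.2
  · rw [if_neg hc, if_neg hc, mul_zero]


end PermGibbs
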